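/- Under the stated hypotheses, suppose that at every boundary point (x, h(x)) with x ∈ (0,r) one has 2μ(Eu)ν^h(x) + λ(div u)ν^h(x) = g(x). Then at every point (x, mx) with x ∈ (0,r) one has 2μ(Ev)ν⁰ + λ(div v)ν⁰ = g(x) + ĝ^v(x) + ǧ^v(x), where the derivatives of v are evaluated at (x, mx), the functions ω_i are evaluated at x, and ĝ^v = (ĝ₁^v, ĝ₂^v), ǧ^v = (ǧ₁^v, ǧ₂^v) are given by: ĝ₁^v := (2μ + λ)ω₁ ∂ₓv₁ + μω₂ ∂ₓv₂; ĝ₂^v := λω₂ ∂ₓv₁ + μω₁ ∂ₓv₂; ǧ₁^v := (μω₂ + 2μω₃ + λω₃ − μω₆) ∂_y v₁ + (λω₁ + λω₄ − μω₅) ∂_y v₂; ǧ₂^v := (μω₁ + μω₄ − λω₅) ∂_y v₁ + (2μω₂ + λω₂ + μω₃ − 2μω₆ − λω₆) ∂_y v₂. -/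

import Mathlib

open MeasureTheory Set

/-- The flattening factor `σ(x) := h'(0)·x / h(x)` (with `σ(0) := 1`), where `m = h'(0)`. -/
noncomputable def sigmaFun (h : ℝ → ℝ) (m : ℝ) (x : ℝ) : ℝ :=
  if x = 0 then 1 else m * x / h x

/-- Partial derivative in `x`. -/
noncomputable def pdx (f : ℝ × ℝ → ℝ) (q : ℝ × ℝ) : ℝ := fderiv ℝ f q (1, 0)

/-- Partial derivative in `y`. -/
noncomputable def pdy (f : ℝ × ℝ → ℝ) (q : ℝ × ℝ) : ℝ := fderiv ℝ f q (0, 1)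

/-- First component of the traction `2μ(Ew)ν + λ(div w)ν` at the point `q`. -/
noncomputable def traction1 (μ lam : ℝ) (w : ℝ × ℝ → ℝ × ℝ) (q : ℝ × ℝ) (ν : ℝ × ℝ) : ℝ :=
  2 * μ * (pdx (fun p => (w p).1) q * ν.1 +
      (pdx (fun p => (w p).2) q + pdy (fun p => (w p).1) q) / 2 * ν.2) +
    lam * (pdx (fun p => (w p).1) q + pdy (fun p => (w p).2) q) * ν.1

/-- Second component of the traction `2μ(Ew)ν + λ(div w)ν` at the point `q`. -/
noncomputable def traction2 (μ lam : ℝ) (w : ℝ × ℝ → ℝ × ℝ) (q : ℝ × ℝ) (ν : ℝ × ℝ) : ℝ :=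
  2 * μ * ((pdx (fun p => (w p).2) q + pdy (fun p => (w p).1) q) / 2 * ν.1 +
      pdy (fun p => (w p).2) q * ν.2) +
    lam * (pdx (fun p => (w p).1) q + pdy (fun p => (w p).2) q) * ν.2

/-- `ω₁(x) := h'(x)/√(1+h'(x)²) - m/√(1+m²)`. -/
noncomputable def omega1 (h h' : ℝ → ℝ) (m x : ℝ) : ℝ :=
  h' x / Real.sqrt (1 + (h' x) ^ 2) - m / Real.sqrt (1 + m ^ 2)

/-- `ω₂(x) := 1/√(1+m²) - 1/√(1+h'(x)²)`. -/
noncomputable def omega2 (h h' : ℝ → ℝ) (m x : ℝ) : ℝ :=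
  1 / Real.sqrt (1 + m ^ 2) - 1 / Real.sqrt (1 + (h' x) ^ 2)

/-- `ω₃(x) := σ'(x) h(x) h'(x)/√(1+h'(x)²)`. -/
noncomputable def omega3 (h h' : ℝ → ℝ) (m x : ℝ) : ℝ :=
  deriv (sigmaFun h m) x * h x * (h' x / Real.sqrt (1 + (h' x) ^ 2))

/-- `ω₄(x) := (σ(x)-1) h'(x)/√(1+h'(x)²)`. -/
noncomputable def omega4 (h h' : ℝ → ℝ) (m x : ℝ) : ℝ :=
  (sigmaFun h m x - 1) * (h' x / Real.sqrt (1 + (h' x) ^ 2))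

/-- `ω₅(x) := σ'(x) h(x)/√(1+h'(x)²)`. -/
noncomputable def omega5 (h h' : ℝ → ℝ) (m x : ℝ) : ℝ :=
  deriv (sigmaFun h m) x * h x * (1 / Real.sqrt (1 + (h' x) ^ 2))

/-- `ω₆(x) := (σ(x)-1)/√(1+h'(x)²)`. -/
noncomputable def omega6 (h h' : ℝ → ℝ) (m x : ℝ) : ℝ :=
  (sigmaFun h m x - 1) * (1 / Real.sqrt (1 + (h' x) ^ 2))

lemma aux_r_lt_beta (η0 M : ℝ) (hη0 : 0 < η0) (hM : 1 < M)
    (β : ℝ) (h' h'' h''' : ℝ → ℝ) (r : ℝ)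
    (hβpos : 0 < β)
    (hd2 : ∀ x ∈ Set.Icc (0:ℝ) β, HasDerivWithinAt h' (h'' x) (Set.Icc 0 β) x)
    (hd3 : ∀ x ∈ Set.Icc (0:ℝ) β, HasDerivWithinAt h'' (h''' x) (Set.Icc 0 β) x)
    (h'0 : 2 * η0 ≤ h' 0) (h'β : h' β ≤ -(2 * η0))
    (hL2 : (∫ x in (0:ℝ)..β, |h'' x| ^ 2) ≤ M)
    (hr' : r ≤ η0 ^ 2 / (4 * M)) : r < β := by
  by_contra hc
  push_neg at hc
  have hM0 : (0:ℝ) < M := by linarith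
  have hβsmall : β ≤ η0 ^ 2 / (4 * M) := le_trans hc hr'
  have hcont'' : ContinuousOn h'' (Set.Icc 0 β) := fun x hx =>
    ((hd3 x hx).differentiableWithinAt).continuousWithinAt
  have hint : IntervalIntegrable h'' volume 0 β :=
    (hcont''.intervalIntegrable_of_Icc hβpos.le)
  have hftc : ∫ y in (0:ℝ)..β, h'' y = h' β - h' 0 := by
    apply intervalIntegral.integral_eq_sub_of_hasDeriv_right_of_le hβpos.le
    · exact fun x hx => ((hd2 x hx).differentiableWithinAt).continuousWithinAt
    · intro x hx
      exact ((hd2 x (Ioo_subset_Icc_self hx)).hasDerivAt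
        (Icc_mem_nhds hx.1 hx.2)).hasDerivWithinAt
    · exact hint
  set ε : ℝ := 4 * M / η0 with hε
  have hεpos : 0 < ε := by positivity
  have habs : IntervalIntegrable (fun x => |h'' x|) volume 0 β := hint.abs
  have hsq : IntervalIntegrable (fun x => ε / 2 + |h'' x| ^ 2 / (2 * ε)) volume 0 β := by
    apply IntervalIntegrable.add intervalIntegrable_const
    exact ((hcont''.abs.pow 2).intervalIntegrable_of_Icc hβpos.le).div_const _
  have hmono : (∫ x in (0:ℝ)..β, |h'' x|) ≤
      ∫ x in (0:ℝ)..β, (ε / 2 + |h'' x| ^ 2 / (2 * ε)) := by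
    apply intervalIntegral.integral_mono_on hβpos.le habs hsq
    intro x _
    rw [div_add_div _ _ (two_ne_zero) (by positivity : (2:ℝ) * ε ≠ 0)]
    rw [le_div_iff₀ (by positivity)]
    nlinarith [sq_nonneg (|h'' x| - ε)]
  have hsplit : (∫ x in (0:ℝ)..β, (ε / 2 + |h'' x| ^ 2 / (2 * ε))) =
      ε / 2 * β + (∫ x in (0:ℝ)..β, |h'' x| ^ 2) / (2 * ε) := by
    rw [intervalIntegral.integral_add (g := fun x => |h'' x| ^ 2 / (2 * ε)) intervalIntegrable_const
      (((hcont''.abs.pow 2).intervalIntegrable_of_Icc hβpos.le).div_const _)]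
    rw [intervalIntegral.integral_const, intervalIntegral.integral_div]
    simp [smul_eq_mul]; ring
  have hbound : (∫ x in (0:ℝ)..β, |h'' x|) ≤ ε / 2 * β + M / (2 * ε) := by
    calc (∫ x in (0:ℝ)..β, |h'' x|) ≤ _ := hmono
      _ = ε / 2 * β + (∫ x in (0:ℝ)..β, |h'' x| ^ 2) / (2 * ε) := hsplit
      _ ≤ ε / 2 * β + M / (2 * ε) := by gcongr
  have habs2 : |∫ y in (0:ℝ)..β, h'' y| ≤ ∫ x in (0:ℝ)..β, |h'' x| :=
    intervalIntegral.abs_integral_le_integral_abs hβpos.le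
  have h5 : 4 * η0 ≤ |∫ y in (0:ℝ)..β, h'' y| := by
    rw [hftc, abs_sub_comm]
    calc 4 * η0 ≤ h' 0 - h' β := by linarith
      _ ≤ |h' 0 - h' β| := le_abs_self _
  have e1 : ε / 2 * β ≤ η0 / 2 := by
    calc ε / 2 * β ≤ ε / 2 * (η0 ^ 2 / (4 * M)) := by
          apply mul_le_mul_of_nonneg_left hβsmall (by positivity)
      _ = η0 / 2 := by rw [hε]; field_simp
  have e2 : M / (2 * ε) = η0 / 8 := by rw [hε]; field_simp; ring
  linarith


set_option maxHeartbeats 1000000 in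
/-- Transformation of the Neumann boundary condition under the flattening map:
if `2μ(Eu)ν^h + λ(div u)ν^h = g` on `Γ_h^{0,r}`, then
`2μ(Ev)ν⁰ + λ(div v)ν⁰ = g + ĝ^v + ǧ^v` on `Γ_r^m`, where `v(x,y) = u(x, y/σ(x))`. -/
theorem stmt_8 (L0 η0 M μ lam : ℝ) (hL0 : 1 ≤ L0) (hη0 : 0 < η0) (hη0' : η0 < 1) (hM : 1 < M)
    (β : ℝ) (h h' h'' h''' : ℝ → ℝ) (r : ℝ)
    (hβpos : 0 < β)
    (hd1 : ∀ x ∈ Set.Icc (0:ℝ) β, HasDerivWithinAt h (h' x) (Set.Icc 0 β) x)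
    (hd2 : ∀ x ∈ Set.Icc (0:ℝ) β, HasDerivWithinAt h' (h'' x) (Set.Icc 0 β) x)
    (hd3 : ∀ x ∈ Set.Icc (0:ℝ) β, HasDerivWithinAt h'' (h''' x) (Set.Icc 0 β) x)
    (hc3 : ContinuousOn h''' (Set.Icc 0 β))
    (hpos : ∀ x ∈ Set.Ioo (0:ℝ) β, 0 < h x)
    (h0 : h 0 = 0) (hβ0 : h β = 0)
    (h'0 : 2 * η0 ≤ h' 0) (h'β : h' β ≤ -(2 * η0))
    (hLip : ∀ x1 ∈ Set.Icc (0:ℝ) β, ∀ x2 ∈ Set.Icc (0:ℝ) β, |h x1 - h x2| ≤ L0 * |x1 - x2|)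
    (hL2 : (∫ x in (0:ℝ)..β, |h'' x| ^ 2) ≤ M)
    (hr : 0 < r) (hr' : r ≤ η0 ^ 2 / (4 * M))
    (U : Set (ℝ × ℝ)) (hU : IsOpen U)
    (hUsub : {q : ℝ × ℝ | 0 < q.1 ∧ q.1 < r ∧ 0 < q.2 ∧ q.2 < h q.1} ∪
        {q : ℝ × ℝ | ∃ x : ℝ, 0 < x ∧ x < r ∧ q = (x, h x)} ⊆ U)
    (u : ℝ × ℝ → ℝ × ℝ) (hu : ContDiffOn ℝ 1 u U)
    (g : ℝ → ℝ × ℝ)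
    (hbc : ∀ x ∈ Set.Ioo (0:ℝ) r,
        traction1 μ lam u (x, h x)
            (-(h' x) / Real.sqrt (1 + (h' x) ^ 2), 1 / Real.sqrt (1 + (h' x) ^ 2)) = (g x).1 ∧
        traction2 μ lam u (x, h x)
            (-(h' x) / Real.sqrt (1 + (h' x) ^ 2), 1 / Real.sqrt (1 + (h' x) ^ 2)) = (g x).2) :
    ∀ x ∈ Set.Ioo (0:ℝ) r,
      traction1 μ lam (fun q => u (q.1, q.2 / sigmaFun h (h' 0) q.1)) (x, h' 0 * x)
          (-(h' 0) / Real.sqrt (1 + (h' 0) ^ 2), 1 / Real.sqrt (1 + (h' 0) ^ 2)) =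
        (g x).1 +
          ((2 * μ + lam) * omega1 h h' (h' 0) x *
              pdx (fun q => (u (q.1, q.2 / sigmaFun h (h' 0) q.1)).1) (x, h' 0 * x) +
            μ * omega2 h h' (h' 0) x *
              pdx (fun q => (u (q.1, q.2 / sigmaFun h (h' 0) q.1)).2) (x, h' 0 * x)) +
          ((μ * omega2 h h' (h' 0) x + 2 * μ * omega3 h h' (h' 0) x +
              lam * omega3 h h' (h' 0) x - μ * omega6 h h' (h' 0) x) *
              pdy (fun q => (u (q.1, q.2 / sigmaFun h (h' 0) q.1)).1) (x, h' 0 * x) +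
            (lam * omega1 h h' (h' 0) x + lam * omega4 h h' (h' 0) x -
              μ * omega5 h h' (h' 0) x) *
              pdy (fun q => (u (q.1, q.2 / sigmaFun h (h' 0) q.1)).2) (x, h' 0 * x)) ∧
      traction2 μ lam (fun q => u (q.1, q.2 / sigmaFun h (h' 0) q.1)) (x, h' 0 * x)
          (-(h' 0) / Real.sqrt (1 + (h' 0) ^ 2), 1 / Real.sqrt (1 + (h' 0) ^ 2)) =
        (g x).2 +
          (lam * omega2 h h' (h' 0) x *
              pdx (fun q => (u (q.1, q.2 / sigmaFun h (h' 0) q.1)).1) (x, h' 0 * x) +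
            μ * omega1 h h' (h' 0) x *
              pdx (fun q => (u (q.1, q.2 / sigmaFun h (h' 0) q.1)).2) (x, h' 0 * x)) +
          ((μ * omega1 h h' (h' 0) x + μ * omega4 h h' (h' 0) x -
              lam * omega5 h h' (h' 0) x) *
              pdy (fun q => (u (q.1, q.2 / sigmaFun h (h' 0) q.1)).1) (x, h' 0 * x) +
            (2 * μ * omega2 h h' (h' 0) x + lam * omega2 h h' (h' 0) x +
              μ * omega3 h h' (h' 0) x - 2 * μ * omega6 h h' (h' 0) x -
              lam * omega6 h h' (h' 0) x) *
              pdy (fun q => (u (q.1, q.2 / sigmaFun h (h' 0) q.1)).2) (x, h' 0 * x)) := by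
  have hrβ : r < β := aux_r_lt_beta η0 M hη0 hM β h' h'' h''' r hβpos hd2 hd3 h'0 h'β hL2 hr'
  intro x hx
  obtain ⟨hx0, hxr⟩ := hx
  set m := h' 0 with hm
  have hm0 : 0 < m := by rw [hm]; linarith
  have hxβ : x < β := hxr.trans hrβ
  have hhx : 0 < h x := hpos x ⟨hx0, hxβ⟩
  have hxne : x ≠ 0 := ne_of_gt hx0
  have hdh : HasDerivAt h (h' x) x :=
    (hd1 x ⟨hx0.le, hxβ.le⟩).hasDerivAt (Icc_mem_nhds hx0 hxβ)
  -- sigma facts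
  have hσval : sigmaFun h m x = m * x / h x := by rw [sigmaFun, if_neg hxne]
  have hσpos : 0 < sigmaFun h m x := by rw [hσval]; positivity
  have hσne : sigmaFun h m x ≠ 0 := ne_of_gt hσpos
  set d : ℝ := (m * h x - m * x * h' x) / h x ^ 2 with hdd
  have hσderiv : HasDerivAt (sigmaFun h m) d x := by
    have h1 : HasDerivAt (fun y => m * y / h y) d x := by
      have h2 : HasDerivAt (fun y : ℝ => m * y) m x := by
        simpa using (hasDerivAt_id x).const_mul m
      simpa [hdd, mul_comm, mul_assoc, mul_left_comm] using h2.fun_div hdh (ne_of_gt hhx)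
    apply h1.congr_of_eventuallyEq
    filter_upwards [eventually_ne_nhds hxne] with y hy
    rw [sigmaFun, if_neg hy]
  have hσd : deriv (sigmaFun h m) x = d := hσderiv.deriv
  -- u differentiable at (x, h x)
  have hmemU : ((x : ℝ), h x) ∈ U := hUsub (Or.inr ⟨x, hx0, hxr, rfl⟩)
  have hud : DifferentiableAt ℝ u (x, h x) :=
    (hu.differentiableOn one_ne_zero).differentiableAt (hU.mem_nhds hmemU)
  set A := fderiv ℝ u (x, h x) with hA
  have hAu : HasFDerivAt u A (x, h x) := hud.hasFDerivAt
  have hA1 : HasFDerivAt (fun p => (u p).1) ((ContinuousLinearMap.fst ℝ ℝ ℝ).comp A) (x, h x) :=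
    (ContinuousLinearMap.fst ℝ ℝ ℝ).hasFDerivAt.comp _ hAu
  have hA2 : HasFDerivAt (fun p => (u p).2) ((ContinuousLinearMap.snd ℝ ℝ ℝ).comp A) (x, h x) :=
    (ContinuousLinearMap.snd ℝ ℝ ℝ).hasFDerivAt.comp _ hAu
  -- the flattening map F
  set p0 : ℝ × ℝ := (x, m * x) with hp0
  have hσF : HasFDerivAt (fun q : ℝ × ℝ => sigmaFun h m q.1)
      (d • ContinuousLinearMap.fst ℝ ℝ ℝ) p0 :=
    hσderiv.comp_hasFDerivAt (f := (Prod.fst : ℝ × ℝ → ℝ)) p0 hasFDerivAt_fst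
  have hinv : HasFDerivAt (fun q : ℝ × ℝ => (sigmaFun h m q.1)⁻¹)
      ((-d / sigmaFun h m x ^ 2) • ContinuousLinearMap.fst ℝ ℝ ℝ) p0 :=
    (hσderiv.inv hσne).comp_hasFDerivAt (f := (Prod.fst : ℝ × ℝ → ℝ)) p0 hasFDerivAt_fst
  have hG : HasFDerivAt (fun q : ℝ × ℝ => q.2 / sigmaFun h m q.1)
      ((m * x) • ((-d / sigmaFun h m x ^ 2) • ContinuousLinearMap.fst ℝ ℝ ℝ) +
        (sigmaFun h m x)⁻¹ • ContinuousLinearMap.snd ℝ ℝ ℝ) p0 := by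
    have := hasFDerivAt_snd.mul hinv (𝕜 := ℝ) (x := p0)
    exact this
  set LF : (ℝ × ℝ) →L[ℝ] (ℝ × ℝ) := (ContinuousLinearMap.fst ℝ ℝ ℝ).prod
      ((m * x) • ((-d / sigmaFun h m x ^ 2) • ContinuousLinearMap.fst ℝ ℝ ℝ) +
        (sigmaFun h m x)⁻¹ • ContinuousLinearMap.snd ℝ ℝ ℝ) with hLF
  have hF : HasFDerivAt (fun q : ℝ × ℝ => (q.1, q.2 / sigmaFun h m q.1)) LF p0 :=
    hasFDerivAt_fst.prodMk hG
  have hFp0 : m * x / sigmaFun h m x = h x := by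
    rw [hσval]; field_simp
  rw [← hFp0] at hA1 hA2
  have hv1 : HasFDerivAt (fun q : ℝ × ℝ => (u (q.1, q.2 / sigmaFun h m q.1)).1)
      (((ContinuousLinearMap.fst ℝ ℝ ℝ).comp A).comp LF) p0 := by have := hA1.comp p0 hF; exact this
  have hv2 : HasFDerivAt (fun q : ℝ × ℝ => (u (q.1, q.2 / sigmaFun h m q.1)).2)
      (((ContinuousLinearMap.snd ℝ ℝ ℝ).comp A).comp LF) p0 := by have := hA2.comp p0 hF; exact this
  rw [hFp0] at hA1 hA2
  -- scalar entries
  set a11 := (A (1, 0)).1 with ha11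
  set a12 := (A (0, 1)).1 with ha12
  set a21 := (A (1, 0)).2 with ha21
  set a22 := (A (0, 1)).2 with ha22
  set e : ℝ := m * x * (-d / sigmaFun h m x ^ 2) with he
  have hdecomp : ∀ k : ℝ, A (1, k) = A (1, 0) + k • A (0, 1) := by
    intro k
    have : ((1 : ℝ), k) = ((1 : ℝ), (0 : ℝ)) + k • ((0 : ℝ), (1 : ℝ)) := by
      simp [Prod.ext_iff]
    rw [this, map_add, _root_.map_smul]
  have hdecomp0 : ∀ k : ℝ, A (0, k) = k • A (0, 1) := by
    intro k
    have : ((0 : ℝ), k) = k • ((0 : ℝ), (1 : ℝ)) := by simp [Prod.ext_iff]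
    rw [this, _root_.map_smul]
  -- values of LF
  have hLF10 : LF (1, 0) = (1, e) := by
    simp [hLF, he, ContinuousLinearMap.prod_apply]
  have hLF01 : LF (0, 1) = (0, (sigmaFun h m x)⁻¹) := by
    simp [hLF, ContinuousLinearMap.prod_apply]
  -- pdx/pdy of v
  have hpv1x : pdx (fun q : ℝ × ℝ => (u (q.1, q.2 / sigmaFun h m q.1)).1) p0 = a11 + e * a12 := by
    rw [pdx, hv1.fderiv]
    simp only [ContinuousLinearMap.comp_apply, hLF10]
    rw [hdecomp e]
    simp [ha11, ha12]
  have hpv1y : pdy (fun q : ℝ × ℝ => (u (q.1, q.2 / sigmaFun h m q.1)).1) p0 =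
      (sigmaFun h m x)⁻¹ * a12 := by
    rw [pdy, hv1.fderiv]
    simp only [ContinuousLinearMap.comp_apply, hLF01]
    rw [hdecomp0]
    simp [ha12]
  have hpv2x : pdx (fun q : ℝ × ℝ => (u (q.1, q.2 / sigmaFun h m q.1)).2) p0 = a21 + e * a22 := by
    rw [pdx, hv2.fderiv]
    simp only [ContinuousLinearMap.comp_apply, hLF10]
    rw [hdecomp e]
    simp [ha21, ha22]
  have hpv2y : pdy (fun q : ℝ × ℝ => (u (q.1, q.2 / sigmaFun h m q.1)).2) p0 =
      (sigmaFun h m x)⁻¹ * a22 := by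
    rw [pdy, hv2.fderiv]
    simp only [ContinuousLinearMap.comp_apply, hLF01]
    rw [hdecomp0]
    simp [ha22]
  -- pdx/pdy of u
  have hpu1x : pdx (fun p => (u p).1) (x, h x) = a11 := by
    rw [pdx, hA1.fderiv]; simp [ha11]
  have hpu1y : pdy (fun p => (u p).1) (x, h x) = a12 := by
    rw [pdy, hA1.fderiv]; simp [ha12]
  have hpu2x : pdx (fun p => (u p).2) (x, h x) = a21 := by
    rw [pdx, hA2.fderiv]; simp [ha21]
  have hpu2y : pdy (fun p => (u p).2) (x, h x) = a22 := by
    rw [pdy, hA2.fderiv]; simp [ha22]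
  obtain ⟨hg1, hg2⟩ := hbc x ⟨hx0, hxr⟩
  rw [traction1, hpu1x, hpu1y, hpu2x, hpu2y] at hg1
  rw [traction2, hpu1x, hpu1y, hpu2x, hpu2y] at hg2
  have hc1 : Real.sqrt (1 + h' x ^ 2) ≠ 0 := by positivity
  have hc0 : Real.sqrt (1 + m ^ 2) ≠ 0 := by positivity
  have hhxne : h x ≠ 0 := ne_of_gt hhx
  have hmne : m ≠ 0 := ne_of_gt hm0
  have pf : ∀ a b : ℝ, ((a, b) : ℝ × ℝ).1 = a := fun _ _ => rfl
  have ps : ∀ a b : ℝ, ((a, b) : ℝ × ℝ).2 = b := fun _ _ => rfl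
  constructor
  · rw [traction1, hpv1x, hpv1y, hpv2x, hpv2y, ← hg1]
    rw [omega1, omega2, omega3, omega4, omega5, omega6, hσd, he, hdd, hσval]
    simp only [pf, ps]
    field_simp
    ring
  · rw [traction2, hpv1x, hpv1y, hpv2x, hpv2y, ← hg2]
    rw [omega1, omega2, omega3, omega4, omega5, omega6, hσd, he, hdd, hσval]
    simp only [pf, ps]
    field_simp
    ring
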